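/- arXiv:2503.17883 — 2 statements merged into one kernel-verified Lean document; each statement's English description precedes it below -/
import Mathlib

section
/- Let e ≥ 1 and n ≥ e+2 be integers. Then T(V_{n,e}) is isomorphic to the star K_{1,e} and T1(V_{n,e}) is isomorphic to K_2 ∨ eK_1; for every real λ ≥ ρ(T1(V_{n,e})) one has R_{V_{n,e}}(λ) = λ(λ+1)(λ² - λ - 2e)/(λ² - e); and the largest real root of λ² - λ - 2e equals ρ(T1(V_{n,e})). -/
open Polynomial Matrix

attribute [local instance] Classical.propDecidable

/-- The spectral radius of a finite simple graph: the largest modulus of a (real)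
eigenvalue of its adjacency matrix. -/
noncomputable def specRad {V : Type} [Fintype V] (G : SimpleGraph V) : ℝ :=
  sSup { r : ℝ | ∃ μ : ℝ, (∃ v : V → ℝ, v ≠ 0 ∧ (G.adjMatrix ℝ) *ᵥ v = μ • v) ∧ r = |μ| }

/-- The characteristic polynomial of the adjacency matrix of a graph. -/
noncomputable def gCharPoly {V : Type} [Fintype V] (G : SimpleGraph V) : Polynomial ℝ :=
  Matrix.charpoly (G.adjMatrix ℝ)

/-- `G` is a connected graph with `n` vertices and `n - 1 + e` edges. -/
def memC (n e : ℕ) (G : SimpleGraph (Fin n)) : Prop :=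
  G.Connected ∧ G.edgeSet.ncard = n - 1 + e

/-- `kk e` is the largest natural number `k` with `k * (k - 1) / 2 ≤ e`. -/
def kk (e : ℕ) : ℕ := Nat.findGreatest (fun k => k * (k - 1) ≤ 2 * e) (e + 2)

def tt (e : ℕ) : ℕ := e - kk e * (kk e - 1) / 2

def bb (e : ℕ) : ℕ := if e = 0 then 1 else if tt e = 0 then kk e + 1 else kk e + 2

/-- The graph `V_{n,e} = (K_{1,e} + (n-e-2)K_1) ∨ K_1` (vertices `0`-based: paper vertex `i`
is `i - 1` here): vertex `0` is adjacent to all other vertices, vertex `1` is additionally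
adjacent to vertices `2, …, e+1`, and there are no other edges. -/
def graphV (n e : ℕ) : SimpleGraph (Fin n) :=
  SimpleGraph.fromRel (fun i j => (i : ℕ) = 0 ∨ ((i : ℕ) = 1 ∧ 2 ≤ (j : ℕ) ∧ (j : ℕ) ≤ e + 1))

/-- The graph `D_{n,e}` (vertices `0`-based): vertex `0` is adjacent to all other vertices,
and for `1 ≤ i < j`, vertices `i` and `j` are adjacent iff `j ≤ kk e` or
(`j = kk e + 1` and `i ≤ tt e`).  For `n < kk e + 2` this is the complete graph. -/
def graphD (n e : ℕ) : SimpleGraph (Fin n) :=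
  SimpleGraph.fromRel (fun i j =>
    (i : ℕ) = 0 ∨ (1 ≤ (i : ℕ) ∧ (i : ℕ) < (j : ℕ) ∧
      ((j : ℕ) ≤ kk e ∨ ((j : ℕ) = kk e + 1 ∧ (i : ℕ) ≤ tt e))))

/-- A graph on `Fin n` whose adjacency matrix is stepwise (i.e. a threshold graph whose
vertices are already arranged in the canonical order). -/
def IsStepwise {n : ℕ} (G : SimpleGraph (Fin n)) : Prop :=
  ∀ i j k l : Fin n, G.Adj i j → i < j → k < l → k ≤ i → l ≤ j → G.Adj k l

/-- The (0-based) index of the last vertex of degree at least 2, i.e. the paper's `s - 1`. -/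
noncomputable def sIdx {n : ℕ} (G : SimpleGraph (Fin n)) : ℕ :=
  Nat.findGreatest (fun i => ∃ h : i < n, 2 ≤ (G.neighborSet ⟨i, h⟩).ncard) (n - 1)

/-- The T-subgraph `T(G)`: the subgraph of `G` induced on vertices `1, …, sIdx G`
(paper vertices `2, …, s`). -/
noncomputable def Tgraph {n : ℕ} (G : SimpleGraph (Fin n)) : SimpleGraph (Fin (sIdx G)) :=
  SimpleGraph.comap (fun i => (⟨(i : ℕ) + 1, by
    have h1 : (i : ℕ) < sIdx G := i.isLt
    have h2 : sIdx G ≤ n - 1 := by unfold sIdx; exact Nat.findGreatest_le _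
    omega⟩ : Fin n)) G

/-- The graph `T1(G) = T(G) ∨ K_1`: the subgraph of `G` induced on vertices
`0, 1, …, sIdx G` (paper vertices `1, …, s`). -/
noncomputable def T1graph {n : ℕ} (G : SimpleGraph (Fin n)) : SimpleGraph (Fin (sIdx G + 1)) :=
  if h : 0 < n then
    SimpleGraph.comap (fun i => (⟨(i : ℕ) % n, Nat.mod_lt _ h⟩ : Fin n)) G
  else ⊥

/-- The rational function `R_G(λ) = λ · P_{T1(G)}(λ) / P_{T(G)}(λ)`. -/
noncomputable def Rfun {n : ℕ} (G : SimpleGraph (Fin n)) : ℝ → ℝ :=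
  fun x => x * (gCharPoly (T1graph G)).eval x / (gCharPoly (Tgraph G)).eval x

/-- The polynomial `Q_{G1,G2}`. -/
noncomputable def Qpoly {n : ℕ} (G1 G2 : SimpleGraph (Fin n)) : Polynomial ℝ :=
  X * (gCharPoly (T1graph G1) * gCharPoly (Tgraph G2)
       - gCharPoly (T1graph G2) * gCharPoly (Tgraph G1))
  + C ((sIdx G1 : ℝ) - (sIdx G2 : ℝ)) * (gCharPoly (Tgraph G1) * gCharPoly (Tgraph G2))

/-- `r` is the largest real root of the polynomial `P`. -/
def IsGreatestRoot (P : Polynomial ℝ) (r : ℝ) : Prop :=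
  P.eval r = 0 ∧ ∀ x : ℝ, P.eval x = 0 → x ≤ r

/-- `r` is the largest real zero of the function `f`. -/
def IsGreatestZero (f : ℝ → ℝ) (r : ℝ) : Prop :=
  f r = 0 ∧ ∀ x : ℝ, f x = 0 → x ≤ r

/-- Disjoint union of two simple graphs. -/
def gSum {α β : Type} (G : SimpleGraph α) (H : SimpleGraph β) : SimpleGraph (α ⊕ β) where
  Adj x y := (∃ a b, x = Sum.inl a ∧ y = Sum.inl b ∧ G.Adj a b) ∨
             (∃ a b, x = Sum.inr a ∧ y = Sum.inr b ∧ H.Adj a b)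
  symm := by
    constructor
    rintro x y (⟨a, b, rfl, rfl, hab⟩ | ⟨a, b, rfl, rfl, hab⟩)
    · exact Or.inl ⟨b, a, rfl, rfl, hab.symm⟩
    · exact Or.inr ⟨b, a, rfl, rfl, hab.symm⟩
  loopless := by
    constructor
    rintro x (⟨a, b, rfl, hx, hab⟩ | ⟨a, b, rfl, hx, hab⟩)
    · obtain rfl := Sum.inl.inj hx; exact G.ne_of_adj hab rfl
    · obtain rfl := Sum.inr.inj hx; exact H.ne_of_adj hab rfl

/-- Join of two simple graphs: all cross edges are present. -/
def gJoin {α β : Type} (G : SimpleGraph α) (H : SimpleGraph β) : SimpleGraph (α ⊕ β) :=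
  (gSum Gᶜ Hᶜ)ᶜ

/-- The polynomial `Ψ_e`. -/
noncomputable def PsiPoly (e : ℕ) : Polynomial ℝ :=
  let k : ℝ := kk e
  let t : ℝ := tt e
  C ((k - 1) * (k - 2) * (k ^ 2 - 3 * k + 4 * t)) * X ^ 3
  - C (k ^ 5 - 6 * k ^ 4 + k ^ 3 * (4 * t + 15) - k ^ 2 * (20 * t + 18)
        + k * (8 * t ^ 2 + 24 * t + 8) - (4 * t ^ 2 + 12 * t)) * X ^ 2
  - C ((k ^ 2 - k + 2 * t) * (k ^ 3 + k ^ 2 * (t - 4) - k * (3 * t - 5)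
        + (4 * t ^ 2 - 2 * t - 2))) * X
  + C (t * (k - t - 1) * (k ^ 2 - 3 * k + 2 * t) * (k ^ 2 - k + 2 * t))


/-! ### Auxiliary lemmas -/

section Aux

open SimpleGraph

variable {α β : Type}

lemma gSum_adj (G : SimpleGraph α) (H : SimpleGraph β) (x y : α ⊕ β) :
    (gSum G H).Adj x y ↔
      (∃ a b, x = Sum.inl a ∧ y = Sum.inl b ∧ G.Adj a b) ∨
      (∃ a b, x = Sum.inr a ∧ y = Sum.inr b ∧ H.Adj a b) := Iff.rfl

lemma gJoin_adj_inl_inl (G : SimpleGraph α) (H : SimpleGraph β) (a b : α) :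
    (gJoin G H).Adj (Sum.inl a) (Sum.inl b) ↔ G.Adj a b := by
  show ((gSum Gᶜ Hᶜ)ᶜ).Adj _ _ ↔ _
  rw [SimpleGraph.compl_adj, gSum_adj]
  constructor
  · rintro ⟨h1, h2⟩
    by_contra hG
    refine h2 (Or.inl ⟨a, b, rfl, rfl, ?_⟩)
    rw [SimpleGraph.compl_adj]
    exact ⟨fun h => h1 (congrArg Sum.inl h), hG⟩
  · intro h
    refine ⟨fun hh => G.ne_of_adj h (Sum.inl.inj hh), ?_⟩
    rintro (⟨a', b', ha, hb, hab⟩ | ⟨a', b', ha, hb, hab⟩)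
    · obtain rfl := Sum.inl.inj ha
      obtain rfl := Sum.inl.inj hb
      rw [SimpleGraph.compl_adj] at hab
      exact hab.2 h
    · simp at ha

lemma gJoin_adj_inl_inr (G : SimpleGraph α) (H : SimpleGraph β) (a : α) (b : β) :
    (gJoin G H).Adj (Sum.inl a) (Sum.inr b) := by
  show ((gSum Gᶜ Hᶜ)ᶜ).Adj _ _
  rw [SimpleGraph.compl_adj, gSum_adj]
  refine ⟨by simp, ?_⟩
  rintro (⟨a', b', ha, hb, hab⟩ | ⟨a', b', ha, hb, hab⟩)
  · simp at hb
  · simp at ha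

lemma gJoin_adj_inr_inl (G : SimpleGraph α) (H : SimpleGraph β) (a : β) (b : α) :
    (gJoin G H).Adj (Sum.inr a) (Sum.inl b) := by
  show ((gSum Gᶜ Hᶜ)ᶜ).Adj _ _
  rw [SimpleGraph.compl_adj, gSum_adj]
  refine ⟨by simp, ?_⟩
  rintro (⟨a', b', ha, hb, hab⟩ | ⟨a', b', ha, hb, hab⟩)
  · simp at ha
  · simp at hb

lemma gJoin_adj_inr_inr (G : SimpleGraph α) (H : SimpleGraph β) (a b : β) :
    (gJoin G H).Adj (Sum.inr a) (Sum.inr b) ↔ H.Adj a b := by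
  show ((gSum Gᶜ Hᶜ)ᶜ).Adj _ _ ↔ _
  rw [SimpleGraph.compl_adj, gSum_adj]
  constructor
  · rintro ⟨h1, h2⟩
    by_contra hH
    refine h2 (Or.inr ⟨a, b, rfl, rfl, ?_⟩)
    rw [SimpleGraph.compl_adj]
    exact ⟨fun h => h1 (congrArg Sum.inr h), hH⟩
  · intro h
    refine ⟨fun hh => H.ne_of_adj h (Sum.inr.inj hh), ?_⟩
    rintro (⟨a', b', ha, hb, hab⟩ | ⟨a', b', ha, hb, hab⟩)
    · simp at ha
    · obtain rfl := Sum.inr.inj ha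
      obtain rfl := Sum.inr.inj hb
      rw [SimpleGraph.compl_adj] at hab
      exact hab.2 h

lemma det_irrel2 {V : Type} [Fintype V] {R : Type} [CommRing R] {i1 i2 : DecidableEq V}
    {M N : Matrix V V R}
    (h : ∀ i j, M i j = N i j) : @Matrix.det V i1 _ R _ M = @Matrix.det V i2 _ R _ N := by
  have hMN : M = N := by ext i j; exact h i j
  subst hMN
  have hi : i1 = i2 := by funext a b; exact Subsingleton.elim _ _
  rw [hi]

lemma eval_gCharPoly {V : Type} [Fintype V] [DecidableEq V] (G : SimpleGraph V) (x : ℝ) :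
    (gCharPoly G).eval x = (x • (1 : Matrix V V ℝ) - G.adjMatrix ℝ).det := by
  have h1 : (x • (1 : Matrix V V ℝ) - G.adjMatrix ℝ).det
      = ((Matrix.charmatrix (G.adjMatrix ℝ)).map (Polynomial.eval x)).det := by
    apply det_irrel2
    intro i j
    by_cases h : i = j <;>
      simp [Matrix.map_apply, Matrix.charmatrix_apply, Matrix.diagonal_apply, Matrix.one_apply,
        h, apply_ite (Polynomial.eval x)]
  have h2 : ((Matrix.charmatrix (G.adjMatrix ℝ)).map (Polynomial.eval x)).det
      = Polynomial.eval x (Matrix.charmatrix (G.adjMatrix ℝ)).det := by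
    rw [show Polynomial.eval x = ⇑(Polynomial.evalRingHom x : Polynomial ℝ →+* ℝ) from rfl,
      RingHom.map_det, RingHom.mapMatrix_apply]
  have h3 : Polynomial.eval x (Matrix.charmatrix (G.adjMatrix ℝ)).det
      = (gCharPoly G).eval x := by
    unfold gCharPoly Matrix.charpoly
    apply congrArg (Polynomial.eval x)
    apply det_irrel2
    intro i j
    by_cases h : i = j <;>
      simp [Matrix.charmatrix_apply, Matrix.diagonal_apply, h]
  exact (h1.trans (h2.trans h3)).symm

lemma gCharPoly_iso {V W : Type} [Fintype V] [Fintype W] {G : SimpleGraph V}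
    {H : SimpleGraph W} (φ : G ≃g H) : gCharPoly G = gCharPoly H := by
  unfold gCharPoly
  rw [← Matrix.charpoly_reindex φ.toEquiv (G.adjMatrix ℝ)]
  congr 1
  ext i j
  have hc : ⇑φ = ⇑φ.toEquiv := rfl
  have hadj : G.Adj (φ.toEquiv.symm i) (φ.toEquiv.symm j) ↔ H.Adj i j := by
    rw [← φ.map_adj_iff, hc, Equiv.apply_symm_apply, Equiv.apply_symm_apply]
  simp only [Matrix.reindex_apply, Matrix.submatrix_apply, SimpleGraph.adjMatrix_apply]
  by_cases h : H.Adj i j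
  · rw [if_pos h, if_pos (hadj.mpr h)]
  · rw [if_neg h, if_neg (fun hh => h (hadj.mp hh))]

lemma eig_iso {V W : Type} [Fintype V] [Fintype W] {G : SimpleGraph V} {H : SimpleGraph W}
    (φ : G ≃g H) {μ : ℝ} (h : ∃ v : W → ℝ, v ≠ 0 ∧ (H.adjMatrix ℝ) *ᵥ v = μ • v) :
    ∃ v : V → ℝ, v ≠ 0 ∧ (G.adjMatrix ℝ) *ᵥ v = μ • v := by
  obtain ⟨v, hv0, hv⟩ := h
  refine ⟨v ∘ φ, ?_, ?_⟩
  · intro h0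
    apply hv0
    funext w
    have h1 := congrFun h0 (φ.symm w)
    simpa using h1
  · funext a
    have key : ((G.adjMatrix ℝ) *ᵥ (v ∘ φ)) a = ((H.adjMatrix ℝ) *ᵥ v) (φ a) := by
      simp only [Matrix.mulVec, dotProduct, SimpleGraph.adjMatrix_apply,
        Function.comp_apply]
      rw [← Equiv.sum_comp φ.toEquiv (fun c => (if H.Adj (φ a) c then (1:ℝ) else 0) * v c)]
      refine Finset.sum_congr rfl fun b _ => ?_
      congr 1
      rw [if_congr (φ.map_adj_iff).symm rfl rfl]
      rfl
    rw [key, hv]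
    simp

lemma specRad_congr {V W : Type} [Fintype V] [Fintype W] {G : SimpleGraph V}
    {H : SimpleGraph W} (φ : G ≃g H) : specRad G = specRad H := by
  unfold specRad
  congr 1
  ext r
  constructor
  · rintro ⟨μ, hex, rfl⟩
    exact ⟨μ, eig_iso φ.symm hex, rfl⟩
  · rintro ⟨μ, hex, rfl⟩
    exact ⟨μ, eig_iso φ hex, rfl⟩

noncomputable def rho (e : ℕ) : ℝ := (1 + Real.sqrt (1 + 8 * e)) / 2

lemma rho_sq (e : ℕ) : rho e ^ 2 = rho e + 2 * e := by
  have h : Real.sqrt (1 + 8 * e) ^ 2 = 1 + 8 * e := Real.sq_sqrt (by positivity)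
  unfold rho
  nlinarith [h]

lemma rho_ge_two (e : ℕ) (he : 1 ≤ e) : 2 ≤ rho e := by
  have h3 : (3:ℝ) ≤ Real.sqrt (1 + 8 * e) := by
    have h9 : (9:ℝ) ≤ 1 + 8 * e := by
      have : (1:ℝ) ≤ e := by exact_mod_cast he
      linarith
    have : Real.sqrt 9 ≤ Real.sqrt (1 + 8 * e) := Real.sqrt_le_sqrt h9
    rwa [show (9:ℝ) = 3 ^ 2 by norm_num, Real.sqrt_sq (by norm_num : (0:ℝ) ≤ 3)] at this
  unfold rho
  linarith

lemma rho_greatest (e : ℕ) (he : 1 ≤ e) :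
    IsGreatestZero (fun x : ℝ => x ^ 2 - x - 2 * e) (rho e) := by
  have hsq := rho_sq e
  have h2 := rho_ge_two e he
  constructor
  · simp only
    linarith
  · intro x hx
    simp only at hx
    have hfact : (x - rho e) * (x + rho e - 1) = 0 := by nlinarith
    rcases mul_eq_zero.mp hfact with h | h
    · linarith
    · linarith

lemma J2_eig_bound (e : ℕ) (he : 1 ≤ e) (μ : ℝ) (v : Fin 2 ⊕ Fin e → ℝ) (hv0 : v ≠ 0)
    (hv : ((gJoin (⊤ : SimpleGraph (Fin 2)) (⊥ : SimpleGraph (Fin e))).adjMatrix ℝ) *ᵥ v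
      = μ • v) : |μ| ≤ rho e := by
  have h2 := rho_ge_two e he
  have hsq := rho_sq e
  have h0 := congrFun hv (Sum.inl 0)
  have h1 := congrFun hv (Sum.inl 1)
  simp only [Matrix.mulVec, dotProduct, SimpleGraph.adjMatrix_apply,
    Fintype.sum_sum_type, gJoin_adj_inl_inl, gJoin_adj_inl_inr, gJoin_adj_inr_inl,
    gJoin_adj_inr_inr, SimpleGraph.top_adj, SimpleGraph.bot_adj, Fin.sum_univ_two,
    if_true, if_false, Pi.smul_apply, smul_eq_mul] at h0 h1
  norm_num at h0 h1
  have hw : ∀ i : Fin e, v (Sum.inl 0) + v (Sum.inl 1) = μ * v (Sum.inr i) := by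
    intro i
    have h := congrFun hv (Sum.inr i)
    simp only [Matrix.mulVec, dotProduct, SimpleGraph.adjMatrix_apply,
      Fintype.sum_sum_type, gJoin_adj_inl_inl, gJoin_adj_inl_inr, gJoin_adj_inr_inl,
      gJoin_adj_inr_inr, SimpleGraph.top_adj, SimpleGraph.bot_adj, Fin.sum_univ_two,
      if_true, if_false, Pi.smul_apply, smul_eq_mul] at h
    norm_num at h
    linarith [h]
  by_cases hμ0 : μ = 0
  · subst hμ0
    simpa using le_trans (by norm_num) h2
  by_cases hμ1 : μ = -1
  · subst hμ1
    rw [abs_neg, abs_one]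
    linarith
  set a := v (Sum.inl 0) with ha
  set b := v (Sum.inl 1) with hb
  have hwv : ∀ i : Fin e, v (Sum.inr i) = (a + b) / μ := by
    intro i
    have h := hw i
    field_simp
    linarith [h]
  have hsum : ∑ i : Fin e, v (Sum.inr i) = e * ((a + b) / μ) := by
    rw [Finset.sum_congr rfl fun i _ => hwv i]
    simp [Finset.sum_const, mul_comm]
  rw [hsum] at h0 h1
  have hab : a = b := by
    have hfac : (μ + 1) * (a - b) = 0 := by
      have hc : b - a = μ * a - μ * b := by linarith
      nlinarith [hc]
    rcases mul_eq_zero.mp hfac with h | h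
    · exact absurd (by linarith : μ = -1) hμ1
    · linarith
  have key : a * (μ ^ 2 - μ - 2 * e) = 0 := by
    have h0' : (b + (e : ℝ) * ((a + b) / μ)) * μ = (μ * a) * μ := by rw [h0]
    field_simp at h0'
    nlinarith [h0', hab]
  have ha0 : a ≠ 0 := by
    intro haz
    apply hv0
    funext x
    rcases x with c | i
    · simp only [Pi.zero_apply]
      have hcv : v (Sum.inl c) = a ∨ v (Sum.inl c) = b := by
        fin_cases c
        · exact Or.inl rfl
        · exact Or.inr rfl
      rcases hcv with h | h
      · rw [h]; exact haz
      · rw [h, ← hab]; exact haz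
    · simp only [Pi.zero_apply]
      rw [hwv i, ← hab, haz]
      simp
  have hμsq : μ ^ 2 - μ - 2 * e = 0 := by
    rcases mul_eq_zero.mp key with h | h
    · exact absurd h ha0
    · exact h
  have hfact : (μ - rho e) * (μ + rho e - 1) = 0 := by nlinarith
  rcases mul_eq_zero.mp hfact with h | h
  · rw [abs_le]
    constructor <;> nlinarith
  · rw [abs_le]
    constructor <;> nlinarith

lemma J2_eig_mem (e : ℕ) (he : 1 ≤ e) :
    ∃ v : Fin 2 ⊕ Fin e → ℝ, v ≠ 0 ∧
      ((gJoin (⊤ : SimpleGraph (Fin 2)) (⊥ : SimpleGraph (Fin e))).adjMatrix ℝ) *ᵥ v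
        = (rho e) • v := by
  have h2 := rho_ge_two e he
  have hsq := rho_sq e
  refine ⟨Sum.elim (fun _ => rho e) (fun _ => 2), ?_, ?_⟩
  · intro h
    have := congrFun h (Sum.inl 0)
    simp only [Sum.elim_inl, Pi.zero_apply] at this
    linarith
  · funext x
    rcases x with c | i
    · simp only [Matrix.mulVec, dotProduct, SimpleGraph.adjMatrix_apply,
        Fintype.sum_sum_type, gJoin_adj_inl_inl, gJoin_adj_inl_inr, gJoin_adj_inr_inl,
        gJoin_adj_inr_inr, SimpleGraph.top_adj, SimpleGraph.bot_adj, Fin.sum_univ_two,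
        Sum.elim_inl, Sum.elim_inr, Pi.smul_apply, smul_eq_mul, Finset.sum_const,
        Finset.card_univ, Fintype.card_fin, nsmul_eq_mul]
      fin_cases c <;> norm_num <;> nlinarith
    · simp only [Matrix.mulVec, dotProduct, SimpleGraph.adjMatrix_apply,
        Fintype.sum_sum_type, gJoin_adj_inl_inl, gJoin_adj_inl_inr, gJoin_adj_inr_inl,
        gJoin_adj_inr_inr, SimpleGraph.top_adj, SimpleGraph.bot_adj, Fin.sum_univ_two,
        Sum.elim_inl, Sum.elim_inr, Pi.smul_apply, smul_eq_mul, Finset.sum_const,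
        Finset.card_univ, Fintype.card_fin, nsmul_eq_mul]
      norm_num
      ring

lemma specRad_J2 (e : ℕ) (he : 1 ≤ e) :
    specRad (gJoin (⊤ : SimpleGraph (Fin 2)) (⊥ : SimpleGraph (Fin e))) = rho e := by
  have h2 := rho_ge_two e he
  unfold specRad
  apply IsGreatest.csSup_eq
  constructor
  · exact ⟨rho e, J2_eig_mem e he, (abs_of_nonneg (by linarith)).symm⟩
  · rintro r ⟨μ, ⟨v, hv0, hv⟩, rfl⟩
    exact J2_eig_bound e he μ v hv0 hv

lemma graphV_adj (n e : ℕ) (i j : Fin n) :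
    (graphV n e).Adj i j ↔ (i : ℕ) ≠ (j : ℕ) ∧ ((i : ℕ) = 0 ∨ (j : ℕ) = 0 ∨
      ((i : ℕ) = 1 ∧ 2 ≤ (j : ℕ) ∧ (j : ℕ) ≤ e + 1) ∨
      ((j : ℕ) = 1 ∧ 2 ≤ (i : ℕ) ∧ (i : ℕ) ≤ e + 1)) := by
  rw [graphV, SimpleGraph.fromRel_adj]
  rw [ne_eq, ← Fin.val_eq_val]
  tauto

lemma sIdx_graphV (n e : ℕ) (he : 1 ≤ e) (hn : e + 2 ≤ n) : sIdx (graphV n e) = e + 1 := by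
  unfold sIdx
  rw [Nat.findGreatest_eq_iff]
  refine ⟨by omega, fun _ => ⟨by omega, ?_⟩, ?_⟩
  · have hsub : ({⟨0, by omega⟩, ⟨1, by omega⟩} : Set (Fin n)) ⊆
        (graphV n e).neighborSet ⟨e + 1, by omega⟩ := by
      rintro j (rfl | rfl)
      · rw [SimpleGraph.mem_neighborSet, graphV_adj]
        exact ⟨(show e + 1 ≠ 0 by omega), Or.inr (Or.inl rfl)⟩
      · rw [SimpleGraph.mem_neighborSet, graphV_adj]
        exact ⟨(show e + 1 ≠ 1 by omega),
          Or.inr (Or.inr (Or.inr ⟨rfl, (show 2 ≤ e + 1 by omega), (show e + 1 ≤ e + 1 by omega)⟩))⟩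
    calc (2 : ℕ) = ({⟨0, by omega⟩, ⟨1, by omega⟩} : Set (Fin n)).ncard := by
          rw [Set.ncard_pair (by simp only [ne_eq, Fin.mk.injEq]; omega)]
      _ ≤ _ := Set.ncard_le_ncard hsub (Set.toFinite _)
  · rintro k hk hkb ⟨hkn, hcard⟩
    have hsub : (graphV n e).neighborSet ⟨k, hkn⟩ ⊆ {(⟨0, by omega⟩ : Fin n)} := by
      intro j hj
      rw [SimpleGraph.mem_neighborSet, graphV_adj] at hj
      have hjz : (j : ℕ) = 0 := by
        rcases hj with ⟨hne, h | h | ⟨h, _⟩ | ⟨_, _, h⟩⟩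
        · exact absurd h (show k ≠ 0 by omega)
        · exact h
        · exact absurd h (show k ≠ 1 by omega)
        · exact absurd h (show ¬ k ≤ e + 1 by omega)
      simp only [Set.mem_singleton_iff, Fin.ext_iff]
      exact hjz
    have := Set.ncard_le_ncard hsub (Set.toFinite _)
    rw [Set.ncard_singleton] at this
    omega

lemma iso_star {m e : ℕ} (hm : m = e + 1) (G : SimpleGraph (Fin m))
    (hadj : ∀ i j : Fin m, G.Adj i j ↔ i ≠ j ∧ ((i : ℕ) = 0 ∨ (j : ℕ) = 0)) :
    Nonempty (G ≃g gJoin (⊤ : SimpleGraph (Fin 1)) (⊥ : SimpleGraph (Fin e))) := by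
  subst hm
  refine ⟨SimpleGraph.Iso.symm ⟨⟨Sum.elim (fun _ => (⟨0, by omega⟩ : Fin (e + 1)))
      (fun j => (⟨(j : ℕ) + 1, by omega⟩ : Fin (e + 1))),
    fun i => if h : (i : ℕ) = 0 then Sum.inl 0 else Sum.inr ⟨(i : ℕ) - 1, by omega⟩,
    ?_, ?_⟩, ?_⟩⟩
  · rintro (a | j)
    · dsimp only [Sum.elim_inl]
      rw [dif_pos rfl]
      exact congrArg Sum.inl (Subsingleton.elim _ _)
    · dsimp only [Sum.elim_inr]
      rw [dif_neg (show ¬((j : ℕ) + 1 = 0) by omega)]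
      exact congrArg Sum.inr (Fin.ext (show (j : ℕ) + 1 - 1 = (j : ℕ) by omega))
  · intro i
    dsimp only
    by_cases h : (i : ℕ) = 0
    · rw [dif_pos h]
      dsimp only [Sum.elim_inl]
      exact Fin.ext h.symm
    · rw [dif_neg h]
      dsimp only [Sum.elim_inr]
      exact Fin.ext (show (i : ℕ) - 1 + 1 = (i : ℕ) by omega)
  · intro x y
    simp only [Equiv.coe_fn_mk]
    rcases x with a | j <;> rcases y with b | j'
    · exact iff_of_false
        (by rw [hadj]; rintro ⟨hne, _⟩; exact hne rfl)
        (by rw [gJoin_adj_inl_inl]; intro h;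
            exact (⊤ : SimpleGraph (Fin 1)).ne_of_adj h (Subsingleton.elim a b))
    · exact iff_of_true
        (by rw [hadj]
            exact ⟨Fin.ne_of_val_ne (show (0 : ℕ) ≠ (j' : ℕ) + 1 by omega), Or.inl rfl⟩)
        (gJoin_adj_inl_inr _ _ _ _)
    · exact iff_of_true
        (by rw [hadj]
            exact ⟨Fin.ne_of_val_ne (show (j : ℕ) + 1 ≠ (0 : ℕ) by omega), Or.inr rfl⟩)
        (gJoin_adj_inr_inl _ _ _ _)
    · exact iff_of_false
        (by rw [hadj]
            rintro ⟨hne, h | h⟩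
            · exact (show (j : ℕ) + 1 ≠ 0 by omega) h
            · exact (show (j' : ℕ) + 1 ≠ 0 by omega) h)
        (by rw [gJoin_adj_inr_inr]; exact fun h => h.elim)

lemma iso_K2 {m e : ℕ} (hm : m = e + 2) (G : SimpleGraph (Fin m))
    (hadj : ∀ i j : Fin m, G.Adj i j ↔ i ≠ j ∧ ((i : ℕ) ≤ 1 ∨ (j : ℕ) ≤ 1)) :
    Nonempty (G ≃g gJoin (⊤ : SimpleGraph (Fin 2)) (⊥ : SimpleGraph (Fin e))) := by
  subst hm
  refine ⟨SimpleGraph.Iso.symm ⟨⟨Sum.elim (fun a : Fin 2 => (⟨(a : ℕ), by omega⟩ : Fin (e + 2)))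
      (fun j => (⟨(j : ℕ) + 2, by omega⟩ : Fin (e + 2))),
    fun i => if h : (i : ℕ) ≤ 1 then Sum.inl ⟨(i : ℕ), by omega⟩
      else Sum.inr ⟨(i : ℕ) - 2, by omega⟩,
    ?_, ?_⟩, ?_⟩⟩
  · rintro (a | j)
    · dsimp only [Sum.elim_inl]
      rw [dif_pos (show ((⟨(a : ℕ), by omega⟩ : Fin (e + 2)) : ℕ) ≤ 1 from by
        show (a : ℕ) ≤ 1; omega)]
      all_goals exact congrArg Sum.inl (Fin.ext rfl)
    · dsimp only [Sum.elim_inr]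
      rw [dif_neg (show ¬((j : ℕ) + 2 ≤ 1) by omega)]
      exact congrArg Sum.inr (Fin.ext (show (j : ℕ) + 2 - 2 = (j : ℕ) by omega))
  · intro i
    dsimp only
    by_cases h : (i : ℕ) ≤ 1
    · rw [dif_pos h]
      try dsimp only [Sum.elim_inl]
      try exact Fin.ext rfl
    · rw [dif_neg h]
      dsimp only [Sum.elim_inr]
      exact Fin.ext (show (i : ℕ) - 2 + 2 = (i : ℕ) by omega)
  · intro x y
    simp only [Equiv.coe_fn_mk]
    rcases x with a | j <;> rcases y with b | j'
    · rw [gJoin_adj_inl_inl, SimpleGraph.top_adj, hadj]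
      constructor
      · rintro ⟨hne, _⟩
        exact fun hab => hne (by rw [hab])
      · intro h
        refine ⟨fun hh => h (by rw [Fin.ext_iff] at hh ⊢; exact hh), Or.inl (show (a : ℕ) ≤ 1 by omega)⟩
    · exact iff_of_true
        (by rw [hadj]
            exact ⟨Fin.ne_of_val_ne (show (a : ℕ) ≠ (j' : ℕ) + 2 by omega),
              Or.inl (show (a : ℕ) ≤ 1 by omega)⟩)
        (gJoin_adj_inl_inr _ _ _ _)
    · exact iff_of_true
        (by rw [hadj]
            exact ⟨Fin.ne_of_val_ne (show (j : ℕ) + 2 ≠ (b : ℕ) by omega),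
              Or.inr (show (b : ℕ) ≤ 1 by omega)⟩)
        (gJoin_adj_inr_inl _ _ _ _)
    · exact iff_of_false
        (by rw [hadj]
            rintro ⟨hne, h | h⟩
            · exact (show ¬((j : ℕ) + 2 ≤ 1) by omega) h
            · exact (show ¬((j' : ℕ) + 2 ≤ 1) by omega) h)
        (by rw [gJoin_adj_inr_inr]; exact fun h => h.elim)

lemma det_aux1 (e : ℕ) (x : ℝ) (he : 1 ≤ e) (hx : x ≠ 0) :
    (x • (1 : Matrix (Fin 1 ⊕ Fin e) (Fin 1 ⊕ Fin e) ℝ)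
      - (gJoin (⊤ : SimpleGraph (Fin 1)) (⊥ : SimpleGraph (Fin e))).adjMatrix ℝ).det
      = x ^ (e - 1) * (x ^ 2 - (e : ℝ)) := by
  have hblock : (x • (1 : Matrix (Fin 1 ⊕ Fin e) (Fin 1 ⊕ Fin e) ℝ)
      - (gJoin (⊤ : SimpleGraph (Fin 1)) (⊥ : SimpleGraph (Fin e))).adjMatrix ℝ) =
      Matrix.fromBlocks (Matrix.of fun _ _ : Fin 1 => x)
        (Matrix.of fun (_ : Fin 1) (_ : Fin e) => (-1 : ℝ))
        (Matrix.of fun (_ : Fin e) (_ : Fin 1) => (-1 : ℝ))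
        (x • (1 : Matrix (Fin e) (Fin e) ℝ)) := by
    ext i j
    rcases i with a | a <;> rcases j with b | b
    · have hab : a = b := Subsingleton.elim a b
      subst hab
      simp [Matrix.one_apply, SimpleGraph.adjMatrix_apply, gJoin_adj_inl_inl]
    · simp [Matrix.one_apply, SimpleGraph.adjMatrix_apply, gJoin_adj_inl_inr]
    · simp [Matrix.one_apply, SimpleGraph.adjMatrix_apply, gJoin_adj_inr_inl]
    · simp [Matrix.one_apply, SimpleGraph.adjMatrix_apply, gJoin_adj_inr_inr,
        Sum.inr.injEq]
  rw [hblock]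
  letI : Invertible (x • (1 : Matrix (Fin e) (Fin e) ℝ)) :=
    ⟨x⁻¹ • 1, by rw [Matrix.smul_mul, Matrix.one_mul, smul_smul, inv_mul_cancel₀ hx, one_smul],
      by rw [Matrix.smul_mul, Matrix.one_mul, smul_smul, mul_inv_cancel₀ hx, one_smul]⟩
  rw [Matrix.det_fromBlocks₂₂]
  have hinv : (⅟(x • (1 : Matrix (Fin e) (Fin e) ℝ))) = x⁻¹ • (1 : Matrix (Fin e) (Fin e) ℝ) :=
    rfl
  have hdetD : (x • (1 : Matrix (Fin e) (Fin e) ℝ)).det = x ^ e := by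
    rw [Matrix.det_smul, Matrix.det_one, Fintype.card_fin, mul_one]
  have hBC : (Matrix.of fun (_ : Fin 1) (_ : Fin e) => (-1 : ℝ)) *
      (⅟(x • (1 : Matrix (Fin e) (Fin e) ℝ))) *
      (Matrix.of fun (_ : Fin e) (_ : Fin 1) => (-1 : ℝ)) =
      Matrix.of fun (_ _ : Fin 1) => x⁻¹ * e := by
    rw [hinv, Matrix.mul_smul, Matrix.mul_one, Matrix.smul_mul]
    ext i j
    simp [Matrix.mul_apply, Finset.sum_const, Finset.card_univ]
  rw [hBC, hdetD]
  rw [Matrix.det_fin_one]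
  simp only [Matrix.sub_apply, Matrix.of_apply]
  have hsplit : x ^ e = x ^ (e - 1) * x := by
    conv_lhs => rw [show e = (e - 1) + 1 by omega]
    rw [pow_succ]
  rw [hsplit, mul_assoc]
  congr 1
  field_simp

lemma det_aux2 (e : ℕ) (x : ℝ) (he : 1 ≤ e) (hx : x ≠ 0) :
    (x • (1 : Matrix (Fin 2 ⊕ Fin e) (Fin 2 ⊕ Fin e) ℝ)
      - (gJoin (⊤ : SimpleGraph (Fin 2)) (⊥ : SimpleGraph (Fin e))).adjMatrix ℝ).det
      = x ^ (e - 1) * ((x + 1) * (x ^ 2 - x - 2 * (e : ℝ))) := by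
  have hblock : (x • (1 : Matrix (Fin 2 ⊕ Fin e) (Fin 2 ⊕ Fin e) ℝ)
      - (gJoin (⊤ : SimpleGraph (Fin 2)) (⊥ : SimpleGraph (Fin e))).adjMatrix ℝ) =
      Matrix.fromBlocks (Matrix.of fun a b : Fin 2 => if a = b then x else -1)
        (Matrix.of fun (_ : Fin 2) (_ : Fin e) => (-1 : ℝ))
        (Matrix.of fun (_ : Fin e) (_ : Fin 2) => (-1 : ℝ))
        (x • (1 : Matrix (Fin e) (Fin e) ℝ)) := by
    ext i j
    rcases i with a | a <;> rcases j with b | b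
    · by_cases hab : a = b
      · subst hab
        simp [Matrix.one_apply, SimpleGraph.adjMatrix_apply, gJoin_adj_inl_inl]
      · simp [Matrix.one_apply, SimpleGraph.adjMatrix_apply, gJoin_adj_inl_inl,
          Sum.inl.injEq, hab]
    · simp [Matrix.one_apply, SimpleGraph.adjMatrix_apply, gJoin_adj_inl_inr]
    · simp [Matrix.one_apply, SimpleGraph.adjMatrix_apply, gJoin_adj_inr_inl]
    · simp [Matrix.one_apply, SimpleGraph.adjMatrix_apply, gJoin_adj_inr_inr,
        Sum.inr.injEq]
  rw [hblock]
  letI : Invertible (x • (1 : Matrix (Fin e) (Fin e) ℝ)) :=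
    ⟨x⁻¹ • 1, by rw [Matrix.smul_mul, Matrix.one_mul, smul_smul, inv_mul_cancel₀ hx, one_smul],
      by rw [Matrix.smul_mul, Matrix.one_mul, smul_smul, mul_inv_cancel₀ hx, one_smul]⟩
  rw [Matrix.det_fromBlocks₂₂]
  have hinv : (⅟(x • (1 : Matrix (Fin e) (Fin e) ℝ))) = x⁻¹ • (1 : Matrix (Fin e) (Fin e) ℝ) :=
    rfl
  have hdetD : (x • (1 : Matrix (Fin e) (Fin e) ℝ)).det = x ^ e := by
    rw [Matrix.det_smul, Matrix.det_one, Fintype.card_fin, mul_one]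
  have hBC : (Matrix.of fun (_ : Fin 2) (_ : Fin e) => (-1 : ℝ)) *
      (⅟(x • (1 : Matrix (Fin e) (Fin e) ℝ))) *
      (Matrix.of fun (_ : Fin e) (_ : Fin 2) => (-1 : ℝ)) =
      Matrix.of fun (_ _ : Fin 2) => x⁻¹ * e := by
    rw [hinv, Matrix.mul_smul, Matrix.mul_one, Matrix.smul_mul]
    ext i j
    simp [Matrix.mul_apply, Finset.sum_const, Finset.card_univ]
  rw [hBC, hdetD]
  rw [Matrix.det_fin_two]
  have e00 : ((Matrix.of fun a b : Fin 2 => if a = b then x else -1)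
      - Matrix.of fun (_ _ : Fin 2) => x⁻¹ * (e : ℝ)) 0 0 = x - x⁻¹ * e := by
    simp
  have e11 : ((Matrix.of fun a b : Fin 2 => if a = b then x else -1)
      - Matrix.of fun (_ _ : Fin 2) => x⁻¹ * (e : ℝ)) 1 1 = x - x⁻¹ * e := by
    simp
  have e01 : ((Matrix.of fun a b : Fin 2 => if a = b then x else -1)
      - Matrix.of fun (_ _ : Fin 2) => x⁻¹ * (e : ℝ)) 0 1 = -1 - x⁻¹ * e := by
    rw [Matrix.sub_apply, Matrix.of_apply, Matrix.of_apply,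
      if_neg (by decide : ¬((0 : Fin 2) = 1))]
  have e10 : ((Matrix.of fun a b : Fin 2 => if a = b then x else -1)
      - Matrix.of fun (_ _ : Fin 2) => x⁻¹ * (e : ℝ)) 1 0 = -1 - x⁻¹ * e := by
    rw [Matrix.sub_apply, Matrix.of_apply, Matrix.of_apply,
      if_neg (by decide : ¬((1 : Fin 2) = 0))]
  rw [e00, e11, e01, e10]
  have hsplit : x ^ e = x ^ (e - 1) * x := by
    conv_lhs => rw [show e = (e - 1) + 1 by omega]
    rw [pow_succ]
  rw [hsplit, mul_assoc]
  congr 1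
  field_simp
  ring

end Aux

theorem stmt_10 (e n : ℕ) (he : 1 ≤ e) (hn : e + 2 ≤ n) :
    Nonempty (Tgraph (graphV n e) ≃g
      gJoin (⊤ : SimpleGraph (Fin 1)) (⊥ : SimpleGraph (Fin e))) ∧
    Nonempty (T1graph (graphV n e) ≃g
      gJoin (⊤ : SimpleGraph (Fin 2)) (⊥ : SimpleGraph (Fin e))) ∧
    (∀ x : ℝ, specRad (T1graph (graphV n e)) ≤ x →
      Rfun (graphV n e) x =
        x * (x + 1) * (x ^ 2 - x - 2 * (e : ℝ)) / (x ^ 2 - (e : ℝ))) ∧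
    IsGreatestZero (fun x : ℝ => x ^ 2 - x - 2 * (e : ℝ))
      (specRad (T1graph (graphV n e))) := by
  have hs : sIdx (graphV n e) = e + 1 := sIdx_graphV n e he hn
  have hT : ∀ i j : Fin (sIdx (graphV n e)), (Tgraph (graphV n e)).Adj i j ↔
      i ≠ j ∧ ((i : ℕ) = 0 ∨ (j : ℕ) = 0) := by
    intro i j
    have hi : (i : ℕ) < e + 1 := hs ▸ i.isLt
    have hj : (j : ℕ) < e + 1 := hs ▸ j.isLt
    rw [Tgraph, SimpleGraph.comap_adj, graphV_adj]
    simp only [ne_eq, Fin.ext_iff]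
    omega
  have hT1 : ∀ i j : Fin (sIdx (graphV n e) + 1), (T1graph (graphV n e)).Adj i j ↔
      i ≠ j ∧ ((i : ℕ) ≤ 1 ∨ (j : ℕ) ≤ 1) := by
    intro i j
    have hi : (i : ℕ) < e + 2 := by have := i.isLt; omega
    have hj : (j : ℕ) < e + 2 := by have := j.isLt; omega
    rw [T1graph, dif_pos (by omega : 0 < n), SimpleGraph.comap_adj, graphV_adj]
    simp only [ne_eq, Fin.ext_iff, Nat.mod_eq_of_lt (by omega : (i : ℕ) < n),
      Nat.mod_eq_of_lt (by omega : (j : ℕ) < n)]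
    omega
  obtain ⟨φ⟩ := iso_star hs (Tgraph (graphV n e)) hT
  obtain ⟨ψ⟩ := iso_K2 (m := sIdx (graphV n e) + 1) (e := e) (by omega) (T1graph (graphV n e)) hT1
  have hspec : specRad (T1graph (graphV n e)) = rho e := by
    rw [specRad_congr ψ, specRad_J2 e he]
  refine ⟨⟨φ⟩, ⟨ψ⟩, ?_, ?_⟩
  · intro x hx
    rw [hspec] at hx
    have h2 := rho_ge_two e he
    have hsq := rho_sq e
    have hx2 : 2 ≤ x := le_trans h2 hx
    have hx0 : x ≠ 0 := by linarith
    have he1 : (1 : ℝ) ≤ e := by exact_mod_cast he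
    have hgt : (e : ℝ) < x ^ 2 := by nlinarith
    have hxe : x ^ 2 - (e : ℝ) ≠ 0 := sub_ne_zero.mpr (ne_of_gt hgt)
    unfold Rfun
    rw [gCharPoly_iso φ, gCharPoly_iso ψ, eval_gCharPoly, eval_gCharPoly,
      det_aux1 e x he hx0, det_aux2 e x he hx0]
    rw [show x * (x ^ (e - 1) * ((x + 1) * (x ^ 2 - x - 2 * (e : ℝ))))
        = x ^ (e - 1) * (x * ((x + 1) * (x ^ 2 - x - 2 * (e : ℝ)))) from by ring]
    rw [mul_div_mul_left _ _ (pow_ne_zero (e - 1) hx0)]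
    rw [show x * ((x + 1) * (x ^ 2 - x - 2 * (e : ℝ)))
        = x * (x + 1) * (x ^ 2 - x - 2 * (e : ℝ)) from by ring]
  · rw [hspec]
    exact rho_greatest e he
end

section
/- For every integer e ≥ 28, the function λ ↦ Ψ_e(λ) is strictly increasing on the interval [k_e, ∞). -/
open Polynomial Matrix

attribute [local instance] Classical.propDecidable

lemma kk_tt_facts (e : ℕ) (he : 28 ≤ e) : 8 ≤ kk e ∧ tt e + 1 ≤ kk e := by
  classical
  have h8 : 8 ≤ kk e := Nat.le_findGreatest (by omega) (by omega)
  have hspec : kk e * (kk e - 1) ≤ 2 * e :=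
    Nat.findGreatest_spec (P := fun k => k * (k - 1) ≤ 2 * e) (m := 8) (by omega) (by omega)
  have hle : kk e ≤ e + 1 := by
    have h2 : kk e ≤ e + 2 := Nat.findGreatest_le _
    rcases Nat.lt_or_ge (kk e) (e + 2) with h | h
    · omega
    · have heq : kk e = e + 2 := le_antisymm h2 h
      rw [heq] at hspec
      have : (e + 2) * (e + 1) ≤ 2 * e := by simpa using hspec
      nlinarith
  have hgt : ¬ ((kk e + 1) * (kk e + 1 - 1) ≤ 2 * e) :=
    Nat.findGreatest_is_greatest (P := fun k => k * (k - 1) ≤ 2 * e) (n := e + 2)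
      (k := kk e + 1) (by show kk e < kk e + 1; omega) (by omega)
  obtain ⟨m, hm⟩ : ∃ m, kk e = m + 1 := ⟨kk e - 1, by omega⟩
  have hev : kk e * (kk e - 1) = 2 * (kk e * (kk e - 1) / 2) := by
    rw [hm]; simp only [Nat.add_sub_cancel]
    have h : Even ((m + 1) * m) := by rw [Nat.mul_comm]; exact Nat.even_mul_succ_self m
    obtain ⟨r, hr⟩ := h
    omega
  have hid : (kk e + 1) * (kk e + 1 - 1) = kk e * (kk e - 1) + 2 * kk e := by
    rw [hm]; simp only [Nat.add_sub_cancel]; ring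
  unfold tt
  omega

set_option maxHeartbeats 1000000 in
theorem stmt_16 (e : ℕ) (he : 28 ≤ e) :
    StrictMonoOn (fun x : ℝ => (PsiPoly e).eval x) (Set.Ici (kk e : ℝ)) := by
  obtain ⟨h8, htk⟩ := kk_tt_facts e he
  set K : ℝ := (kk e : ℝ) with hKdef
  set T : ℝ := (tt e : ℝ) with hTdef
  have hK : (8 : ℝ) ≤ K := by rw [hKdef]; exact_mod_cast h8
  have hT0 : (0 : ℝ) ≤ T := Nat.cast_nonneg _
  have hT : T + 1 ≤ K := by
    rw [hKdef, hTdef]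
    exact_mod_cast htk
  have hP : PsiPoly e =
      Polynomial.C ((K - 1) * (K - 2) * (K ^ 2 - 3 * K + 4 * T)) * Polynomial.X ^ 3
      - Polynomial.C (K ^ 5 - 6 * K ^ 4 + K ^ 3 * (4 * T + 15) - K ^ 2 * (20 * T + 18)
          + K * (8 * T ^ 2 + 24 * T + 8) - (4 * T ^ 2 + 12 * T)) * Polynomial.X ^ 2
      - Polynomial.C ((K ^ 2 - K + 2 * T) * (K ^ 3 + K ^ 2 * (T - 4) - K * (3 * T - 5)
          + (4 * T ^ 2 - 2 * T - 2))) * Polynomial.X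
      + Polynomial.C (T * (K - T - 1) * (K ^ 2 - 3 * K + 2 * T) * (K ^ 2 - K + 2 * T)) := rfl
  have hderiv : ∀ x : ℝ, ((PsiPoly e).derivative).eval x =
      3 * ((K - 1) * (K - 2) * (K ^ 2 - 3 * K + 4 * T)) * x ^ 2
      - 2 * (K ^ 5 - 6 * K ^ 4 + K ^ 3 * (4 * T + 15) - K ^ 2 * (20 * T + 18)
          + K * (8 * T ^ 2 + 24 * T + 8) - (4 * T ^ 2 + 12 * T)) * x
      - ((K ^ 2 - K + 2 * T) * (K ^ 3 + K ^ 2 * (T - 4) - K * (3 * T - 5)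
          + (4 * T ^ 2 - 2 * T - 2))) := by
    intro x
    rw [hP]
    simp only [Polynomial.derivative_add, Polynomial.derivative_sub,
      Polynomial.derivative_C_mul, Polynomial.derivative_X_pow, Polynomial.derivative_X,
      Polynomial.eval_add, Polynomial.eval_sub, Polynomial.eval_mul, Polynomial.eval_C,
      Polynomial.eval_pow, Polynomial.eval_X, Polynomial.eval_one,
      Polynomial.derivative_C, Polynomial.eval_zero, Polynomial.eval_natCast]
    push_cast
    ring
  apply strictMonoOn_of_deriv_pos (convex_Ici _)
    (PsiPoly e).continuousOn
  intro x hx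
  rw [interior_Ici] at hx
  have hx' : K ≤ x := le_of_lt hx
  rw [Polynomial.deriv, hderiv]
  have hA : 0 < (K - 1) * (K - 2) * (K ^ 2 - 3 * K + 4 * T) := by
    have h1 : (0 : ℝ) < K - 1 := by linarith
    have h2 : (0 : ℝ) < K - 2 := by linarith
    have h3 : (0 : ℝ) < K ^ 2 - 3 * K + 4 * T := by nlinarith [sq_nonneg (K - 8)]
    exact mul_pos (mul_pos h1 h2) h3
  have h2 : (K ^ 5 - 6 * K ^ 4 + K ^ 3 * (4 * T + 15) - K ^ 2 * (20 * T + 18)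
      + K * (8 * T ^ 2 + 24 * T + 8) - (4 * T ^ 2 + 12 * T))
      ≤ 3 * ((K - 1) * (K - 2) * (K ^ 2 - 3 * K + 4 * T)) * K := by
    nlinarith [mul_nonneg (mul_nonneg hT0 hT0) (by linarith : (0:ℝ) ≤ K - 8),
      mul_nonneg hT0 (by linarith : (0:ℝ) ≤ K - 1 - T),
      mul_nonneg (mul_nonneg hT0 (by linarith : (0:ℝ) ≤ K - 8)) (by linarith : (0:ℝ) ≤ K - 8),
      mul_nonneg (mul_nonneg (by linarith : (0:ℝ) ≤ K - 8) (by linarith : (0:ℝ) ≤ K - 8))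
        (mul_nonneg (by linarith : (0:ℝ) ≤ K - 8) (by linarith : (0:ℝ) ≤ K - 8)),
      sq_nonneg (K - 8), sq_nonneg T, mul_nonneg hT0 (by linarith : (0:ℝ) ≤ K - 8)]
  have h3 : 0 < 3 * ((K - 1) * (K - 2) * (K ^ 2 - 3 * K + 4 * T)) * K ^ 2
      - 2 * (K ^ 5 - 6 * K ^ 4 + K ^ 3 * (4 * T + 15) - K ^ 2 * (20 * T + 18)
          + K * (8 * T ^ 2 + 24 * T + 8) - (4 * T ^ 2 + 12 * T)) * K
      - ((K ^ 2 - K + 2 * T) * (K ^ 3 + K ^ 2 * (T - 4) - K * (3 * T - 5)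
          + (4 * T ^ 2 - 2 * T - 2))) := by
    nlinarith [mul_nonneg (mul_nonneg hT0 hT0) (by linarith : (0:ℝ) ≤ K - 8),
      mul_nonneg (mul_nonneg hT0 hT0) hT0,
      mul_nonneg (mul_nonneg hT0 (by linarith : (0:ℝ) ≤ K - 8)) (by linarith : (0:ℝ) ≤ K - 8),
      mul_nonneg (mul_nonneg (by linarith : (0:ℝ) ≤ K - 8) (by linarith : (0:ℝ) ≤ K - 8))
        (mul_nonneg (by linarith : (0:ℝ) ≤ K - 8) (by linarith : (0:ℝ) ≤ K - 8)),
      mul_nonneg hT0 (by linarith : (0:ℝ) ≤ K - 1 - T),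
      mul_nonneg (mul_nonneg hT0 (by linarith : (0:ℝ) ≤ K - 1 - T)) (by linarith : (0:ℝ) ≤ K - 8)]
  nlinarith [mul_nonneg hA.le (sq_nonneg (x - K)),
    mul_nonneg (sub_nonneg.2 h2) (sub_nonneg.2 hx'), h3]
end
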